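/- For the complete graph K_n with hatness function h and guessing function g, the sages have a winning strategy in the hat guessing game ⟨K_n, h, g⟩ if and only if the sum over all vertices v of g(v)/h(v) is at least 1. -/

import Mathlib

/-- A winning strategy in the hat guessing game `⟨G, h, g⟩`: each sage `v` deterministically
outputs at most `g v` guesses depending only on the hat colors of its neighbors, and for
every hat assignment (with `c v < h v`) some sage's guess set contains its own color. -/
def HatWinning {V : Type*} (G : SimpleGraph V) (h g : V → ℕ) : Prop :=
  ∃ σ : V → (V → ℕ) → Finset ℕ,
    (∀ v c c', (∀ u, G.Adj v u → c u = c' u) → σ v c = σ v c') ∧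
    (∀ v c, (σ v c).card ≤ g v) ∧
    ∀ c : V → ℕ, (∀ v, c v < h v) → ∃ v, c v ∈ σ v c

/-- The hat guessing game played by the sages occupying the vertices of `S` only
(the game on the induced subgraph `G[S]`). -/
def HatWinningOn {V : Type*} (G : SimpleGraph V) (S : Set V) (h g : V → ℕ) : Prop :=
  ∃ σ : V → (V → ℕ) → Finset ℕ,
    (∀ v ∈ S, ∀ c c', (∀ u ∈ S, G.Adj v u → c u = c' u) → σ v c = σ v c') ∧
    (∀ v ∈ S, ∀ c, (σ v c).card ≤ g v) ∧
    ∀ c : V → ℕ, (∀ v ∈ S, c v < h v) → ∃ v ∈ S, c v ∈ σ v c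

/-- coverage: prefix sums -/
lemma cover_aux (L : ℕ → ℕ) (n H S : ℕ) (hS : S < H)
    (hH : H ≤ ∑ i ∈ Finset.range n, L i) :
    ∃ k < n, (∑ i ∈ Finset.range k, L i) ≤ S ∧
      S < (∑ i ∈ Finset.range k, L i) + L k := by
  have hex : ∃ k, S < ∑ i ∈ Finset.range k, L i := ⟨n, lt_of_lt_of_le hS hH⟩
  classical
  set k0 := Nat.find hex with hk0
  have hQ : S < ∑ i ∈ Finset.range k0, L i := Nat.find_spec hex
  have h1 : 1 ≤ k0 := by
    rcases Nat.eq_zero_or_pos k0 with h | h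
    · exfalso; rw [h] at hQ; simp at hQ
    · exact h
  have hle : k0 ≤ n := Nat.find_min' hex (lt_of_lt_of_le hS hH)
  refine ⟨k0 - 1, by omega, ?_, ?_⟩
  · have := Nat.find_min hex (m := k0 - 1) (by omega)
    omega
  · have : k0 - 1 + 1 = k0 := by omega
    have h2 : S < ∑ i ∈ Finset.range (k0 - 1) , L i + L (k0 - 1) := by
      rw [← Finset.sum_range_succ, this]; exact hQ
    exact h2

/-- cardinality of guess set -/
lemma guess_card (hv m gv a t : ℕ) (hm : 0 < m) :
    ((Finset.range hv).filter (fun x =>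
      a ≤ (x * m + t) % (hv * m) ∧ (x * m + t) % (hv * m) < a + gv * m)).card ≤ gv := by
  have := Finset.card_le_card_of_injOn
    (s := (Finset.range hv).filter (fun x =>
      a ≤ (x * m + t) % (hv * m) ∧ (x * m + t) % (hv * m) < a + gv * m))
    (t := Finset.range gv)
    (fun x => ((x * m + t) % (hv * m) - a) / m) ?_ ?_
  · simpa using this
  · intro x hx
    simp only [Finset.mem_coe, Finset.mem_filter, Finset.mem_range] at hx ⊢
    obtain ⟨hx1, hx2, hx3⟩ := hx
    rw [Nat.div_lt_iff_lt_mul hm]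
    omega
  · intro x hx y hy hxy
    simp only [Finset.coe_filter, Set.mem_setOf_eq, Finset.mem_range] at hx hy
    simp only at hxy
    obtain ⟨hx1, hx2, hx3⟩ := hx
    obtain ⟨hy1, hy2, hy3⟩ := hy
    have hmod : ∀ z : ℕ, (z * m + t) % (hv * m) % m = t % m := by
      intro z
      rw [Nat.mod_mod_of_dvd _ ⟨hv, by ring⟩, add_comm, Nat.add_mul_mod_self_right]
    have hvxm := hmod x
    have hvym := hmod y
    have hsub : ((x * m + t) % (hv * m) - a) % m = ((y * m + t) % (hv * m) - a) % m := by
      apply Nat.ModEq.add_right_cancel' a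
      show (_ + a) % m = (_ + a) % m
      rw [Nat.sub_add_cancel hx2, Nat.sub_add_cancel hy2]
      show _ % m = _ % m
      rw [hvxm, hvym]
    have heq0 : (x * m + t) % (hv * m) - a = (y * m + t) % (hv * m) - a := by
      rw [← Nat.div_add_mod ((x * m + t) % (hv * m) - a) m,
          ← Nat.div_add_mod ((y * m + t) % (hv * m) - a) m, hxy, hsub]
    have heq : (x * m + t) % (hv * m) = (y * m + t) % (hv * m) := by omega
    have hc : x % hv * m = y % hv * m := by
      have h2 : x * m % (hv * m) = y * m % (hv * m) :=
        Nat.ModEq.add_right_cancel' t heq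
      rwa [Nat.mul_mod_mul_right, Nat.mul_mod_mul_right] at h2
    have : x % hv = y % hv := Nat.eq_of_mul_eq_mul_right hm hc
    rwa [Nat.mod_eq_of_lt hx1, Nat.mod_eq_of_lt hy1] at this

lemma conv_aux (n : ℕ) (h g : Fin n → ℕ) (hpos : ∀ v, 0 < h v) :
    (1 ≤ ∑ v : Fin n, (g v : ℚ) / (h v : ℚ)) ↔
      (∏ v : Fin n, h v) ≤ ∑ v : Fin n, g v * ∏ u ∈ Finset.univ.erase v, h u := by
  classical
  have hHpos : 0 < ∏ v : Fin n, h v := Finset.prod_pos (fun v _ => hpos v)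
  have hhm : ∀ v : Fin n, h v * ∏ u ∈ Finset.univ.erase v, h u = ∏ v : Fin n, h v :=
    fun v => Finset.mul_prod_erase _ _ (Finset.mem_univ v)
  have key : ∀ v : Fin n, (g v : ℚ) / (h v : ℚ) =
      ((g v * ∏ u ∈ Finset.univ.erase v, h u : ℕ) : ℚ) / ((∏ v : Fin n, h v : ℕ) : ℚ) := by
    intro v
    have hm0 : (0:ℚ) < ∏ i ∈ Finset.univ.erase v, (h i : ℚ) :=
      Finset.prod_pos (fun u _ => by exact_mod_cast hpos u)
    rw [← hhm v]
    push_cast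
    rw [mul_div_mul_right _ _ hm0.ne']
  rw [Finset.sum_congr rfl (fun v _ => key v), ← Finset.sum_div, ← Nat.cast_sum,
    one_le_div (by exact_mod_cast hHpos), Nat.cast_le]

/-- The game `⟨K_n, h, g⟩` is winning iff `∑ g(v)/h(v) ≥ 1`. -/
theorem clique_winning_iff (n : ℕ) (h g : Fin n → ℕ) (hpos : ∀ v, 0 < h v) :
    HatWinning (⊤ : SimpleGraph (Fin n)) h g ↔
      1 ≤ ∑ v : Fin n, (g v : ℚ) / (h v : ℚ) := by
  classical
  rw [conv_aux n h g hpos]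
  set m : Fin n → ℕ := fun v => ∏ u ∈ Finset.univ.erase v, h u with hmdef
  have hmpos : ∀ v, 0 < m v := fun v => Finset.prod_pos (fun u _ => hpos u)
  have hHm : ∀ v : Fin n, h v * m v = ∏ v : Fin n, h v :=
    fun v => Finset.mul_prod_erase _ _ (Finset.mem_univ v)
  have hHpos : 0 < ∏ v : Fin n, h v := Finset.prod_pos (fun v _ => hpos v)
  constructor
  · rintro ⟨σ, hvis, hcard, hwin⟩
    set co : (∀ u : Fin n, Fin (h u)) → (Fin n → ℕ) := fun a u => (a u : ℕ) with hco
    set W : Fin n → Finset (∀ u : Fin n, Fin (h u)) := fun v =>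
      (Finset.univ : Finset (∀ u : Fin n, Fin (h u))).filter (fun a => co a v ∈ σ v (co a)) with hW
    have hWcard : ∀ v : Fin n, (W v).card ≤ g v * m v := by
      intro v
      set f : (∀ u : Fin n, Fin (h u)) → (∀ u : {u : Fin n // u ≠ v}, Fin (h u.1)) := fun a u => a u.1 with hf
      have fiber : ∀ b ∈ (W v).image f,
          ((W v).filter (fun a => f a = b)).card ≤ g v := by
        intro b _
        set c0 : Fin n → ℕ := fun u => if hu : u = v then 0 else (b ⟨u, hu⟩ : ℕ) with hc0
        have hσ : ∀ a ∈ (W v).filter (fun a => f a = b), σ v (co a) = σ v c0 := by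
          intro a ha
          obtain ⟨-, hab⟩ := Finset.mem_filter.1 ha
          apply hvis v (co a) c0
          intro u hu
          rw [SimpleGraph.top_adj] at hu
          have huv : ¬ (u = v) := fun e => hu e.symm
          simp only [hc0, dif_neg huv]
          have := congrFun hab ⟨u, huv⟩
          simp only [hf] at this
          simp [hco, this]
        refine le_trans (Finset.card_le_card_of_injOn (fun a => co a v) ?_ ?_) (hcard v c0)
        · intro a ha
          have hmem := (Finset.mem_filter.1 (Finset.mem_filter.1 ha).1).2
          rw [← hσ a ha]
          exact hmem
        · intro a ha a' ha' haa'
          simp only [Finset.coe_filter, Set.mem_setOf_eq] at ha ha'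
          funext u
          by_cases huv : u = v
          · subst huv
            exact Fin.ext haa'
          · have h1 := congrFun ha.2 ⟨u, huv⟩
            have h2 := congrFun ha'.2 ⟨u, huv⟩
            simp only [hf] at h1 h2
            rw [h1, h2]
      have himg : ((W v).image f).card ≤ m v := by
        have h1 : ((W v).image f).card ≤ Fintype.card (∀ u : {u : Fin n // u ≠ v}, Fin (h u.1)) := by
          rw [← Finset.card_univ]
          exact Finset.card_le_univ _
        have h2 : Fintype.card (∀ u : {u : Fin n // u ≠ v}, Fin (h u.1)) = m v := by
          rw [Fintype.card_pi]
          simp only [Fintype.card_fin]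
          rw [hmdef]
          exact (Finset.prod_subtype (Finset.univ.erase v)
            (by intro x; simp [Finset.mem_erase]) h).symm
        omega
      calc (W v).card ≤ g v * ((W v).image f).card :=
            Finset.card_le_mul_card_image (W v) (g v) fiber
        _ ≤ g v * m v := Nat.mul_le_mul_left _ himg
    have hcover : (Finset.univ : Finset (∀ u : Fin n, Fin (h u))) ⊆ Finset.univ.biUnion W := by
      intro a _
      obtain ⟨v, hv⟩ := hwin (co a) (fun v => (a v).isLt)
      exact Finset.mem_biUnion.2 ⟨v, Finset.mem_univ v,
        Finset.mem_filter.2 ⟨Finset.mem_univ a, hv⟩⟩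
    have hcardΩ : Fintype.card (∀ u : Fin n, Fin (h u)) = ∏ v : Fin n, h v := by
      rw [Fintype.card_pi]
      simp
    calc ∏ v : Fin n, h v = (Finset.univ : Finset (∀ u : Fin n, Fin (h u))).card := by
          rw [Finset.card_univ, hcardΩ]
      _ ≤ (Finset.univ.biUnion W).card := Finset.card_le_card hcover
      _ ≤ ∑ v : Fin n, (W v).card := Finset.card_biUnion_le
      _ ≤ ∑ v : Fin n, g v * m v := Finset.sum_le_sum (fun v _ => hWcard v)
  · intro hge
    set H := ∏ v : Fin n, h v with hHdef
    set Lnat : ℕ → ℕ := fun i => if hi : i < n then g ⟨i, hi⟩ * m ⟨i, hi⟩ else 0 with hLdef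
    have hLnat : ∀ v : Fin n, Lnat v.val = g v * m v := by
      intro v
      simp [hLdef, v.isLt]
    have hsumL : ∑ i ∈ Finset.range n, Lnat i = ∑ v : Fin n, g v * m v := by
      rw [← Fin.sum_univ_eq_sum_range]
      exact Finset.sum_congr rfl (fun v _ => hLnat v)
    set A : ℕ → ℕ := fun k => ∑ i ∈ Finset.range k, Lnat i with hAdef
    refine ⟨fun v c => (Finset.range (h v)).filter (fun x =>
      A v.val ≤ (x * m v + (∑ u ∈ Finset.univ.erase v, c u * m u)) % H ∧
      (x * m v + (∑ u ∈ Finset.univ.erase v, c u * m u)) % H < A v.val + g v * m v),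
      ?_, ?_, ?_⟩
    · intro v c c' hcc
      have hsum : (∑ u ∈ Finset.univ.erase v, c u * m u)
          = ∑ u ∈ Finset.univ.erase v, c' u * m u := by
        refine Finset.sum_congr rfl (fun u hu => ?_)
        rw [hcc u (by rw [SimpleGraph.top_adj]; exact ((Finset.mem_erase.1 hu).1).symm)]
      simp only [hsum]
    · intro v c
      have hHvm : H = h v * m v := (hHm v).symm
      rw [hHvm]
      exact guess_card (h v) (m v) (g v) (A v.val) _ (hmpos v)
    · intro c hc
      have hSH : (∑ u : Fin n, c u * m u) % H < H := Nat.mod_lt _ hHpos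
      obtain ⟨k, hk, h1, h2⟩ := cover_aux Lnat n H ((∑ u : Fin n, c u * m u) % H) hSH
        (by rw [hsumL]; exact hge)
      refine ⟨⟨k, hk⟩, Finset.mem_filter.2 ⟨Finset.mem_range.2 (hc _), ?_, ?_⟩⟩
      · have : c ⟨k, hk⟩ * m ⟨k, hk⟩ + ∑ u ∈ Finset.univ.erase ⟨k, hk⟩, c u * m u
            = ∑ u : Fin n, c u * m u :=
          Finset.add_sum_erase Finset.univ (fun u => c u * m u) (Finset.mem_univ (⟨k, hk⟩ : Fin n))
        rw [this]
        exact h1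
      · have : c ⟨k, hk⟩ * m ⟨k, hk⟩ + ∑ u ∈ Finset.univ.erase ⟨k, hk⟩, c u * m u
            = ∑ u : Fin n, c u * m u :=
          Finset.add_sum_erase Finset.univ (fun u => c u * m u) (Finset.mem_univ (⟨k, hk⟩ : Fin n))
        rw [this]
        have h2' : (∑ u : Fin n, c u * m u) % H < A k + g ⟨k, hk⟩ * m ⟨k, hk⟩ := by
          rw [← hLnat ⟨k, hk⟩]
          exact h2
        exact h2'
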